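/- arXiv:math/0608457 — 2 statements merged into one kernel-verified Lean document; each statement's English description precedes it below -/
import Mathlib

section
/- Let U_C be the q×q unit upper triangular matrix over A whose (i,j)-entry for i < j is C_{i,j} (with 1's on the diagonal and 0's below), and let U_M be the q×q unit upper triangular matrix whose (i,j)-entry for i < j is −M_{i,j}. Then both products U_C · U_M and U_M · U_C equal the identity matrix I_q (the two claims are independent, since A is noncommutative). -/
open scoped BigOperators

/-- A finite sequence of positive integers is *admissible* if between any two
occurrences of a number `s` there is an entry greater than `s`. -/
def IsAdmissible (l : List ℕ) : Prop :=
  ∀ (l₁ l₂ l₃ : List ℕ) (s : ℕ), l = l₁ ++ s :: (l₂ ++ s :: l₃) → ∃ t ∈ l₂, s < t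

/-- `Dset n` is the set of admissible sequences all of whose entries lie in
`{1, …, n-1}` (including the empty sequence). -/
def Dset (n : ℕ) : Set (List ℕ) :=
  {l | IsAdmissible l ∧ ∀ x ∈ l, 1 ≤ x ∧ x < n}

/-- The product `B i i₁ * B i₁ i₂ * ⋯ * B i_c j` along a sequence `[i₁, …, i_c]`;
the empty sequence contributes `B i j`. -/
def pathProd {A : Type*} [Ring A] (B : ℕ → ℕ → A) (i j : ℕ) : List ℕ → A
  | [] => B i j
  | a :: l => B i a * pathProd B a j l

/-- `M i j = Σ_{(i₁,…,i_c) ∈ D_{min(i,j)}} B i i₁ ⋯ B i_c j`. -/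
noncomputable def Mpoly {A : Type*} [Ring A] (B : ℕ → ℕ → A) (i j : ℕ) : A :=
  ∑ᶠ l ∈ Dset (min i j), pathProd B i j l

/-- `C i j` for `i < j` sums `B i i₁ ⋯ B i_c j` over sequences with
`(i, i₁, …, i_c) ∈ D_j`; and `C n n = M n n`. -/
noncomputable def Cpoly {A : Type*} [Ring A] (B : ℕ → ℕ → A) (i j : ℕ) : A :=
  if i = j then Mpoly B i j
  else ∑ᶠ l ∈ {l : List ℕ | (i :: l) ∈ Dset j}, pathProd B i j l

/-- The generators `B_{i,j}` of the free noncommutative unital ℤ-algebra. -/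
noncomputable def Bgen : ℕ → ℕ → FreeAlgebra ℤ (ℕ × ℕ) :=
  fun i j => FreeAlgebra.ι ℤ (i, j)

/-- The commuting indeterminates `B_{i,j}` of the polynomial ring `ℤ[B_{i,j}]`. -/
noncomputable def Bcomm : ℕ → ℕ → MvPolynomial (ℕ × ℕ) ℤ :=
  fun i j => MvPolynomial.X (i, j)



lemma isAdmissible_nil : IsAdmissible [] := by
  intro l₁ l₂ l₃ s h
  exact absurd h (by simp)

lemma IsAdmissible.infix {l l' : List ℕ} (h : IsAdmissible l) (hinf : l' <:+: l) :
    IsAdmissible l' := by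
  obtain ⟨u, v, rfl⟩ := hinf
  intro l₁ l₂ l₃ s hl'
  exact h (u ++ l₁) l₂ (l₃ ++ v) s (by rw [hl']; simp)

lemma isAdmissible_cons {k : ℕ} {b : List ℕ} (hb : IsAdmissible b)
    (hlt : ∀ x ∈ b, x < k) : IsAdmissible (k :: b) := by
  intro l₁ l₂ l₃ s h
  cases l₁ with
  | nil =>
      simp only [List.nil_append, List.cons.injEq] at h
      obtain ⟨rfl, rfl⟩ := h
      exact absurd (hlt k (by simp)) (lt_irrefl k)
  | cons a t =>
      simp only [List.cons_append, List.cons.injEq] at h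
      exact hb t l₂ l₃ s h.2

lemma isAdmissible_append {a b : List ℕ} {k : ℕ} (ha : IsAdmissible a)
    (hb : IsAdmissible (k :: b)) (hlt : ∀ x ∈ a, x < k) :
    IsAdmissible (a ++ k :: b) := by
  have hbtail : IsAdmissible b := hb.infix ⟨[k], [], by simp⟩
  intro l₁ l₂ l₃ s h
  rcases List.append_eq_append_iff.mp h with ⟨u, hu1, hu2⟩ | ⟨v, hv1, hv2⟩
  · cases u with
    | nil =>
        simp only [List.nil_append, List.cons.injEq] at hu2
        obtain ⟨rfl, rfl⟩ := hu2
        exact hb [] l₂ l₃ k (by simp)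
    | cons c u' =>
        simp only [List.cons_append, List.cons.injEq] at hu2
        exact hbtail u' l₂ l₃ s hu2.2
  · cases v with
    | nil =>
        rw [List.nil_append] at hv2
        injection hv2 with h1 h2
        subst h1
        exact hb [] l₂ l₃ s (by rw [← h2]; rfl)
    | cons s' v' =>
        simp only [List.cons_append, List.cons.injEq] at hv2
        obtain ⟨rfl, hv2⟩ := hv2
        have hsa : s ∈ a := by rw [hv1]; simp
        have hsk : s < k := hlt s hsa
        rcases List.append_eq_append_iff.mp hv2 with ⟨w, hw1, hw2⟩ | ⟨w, hw1, hw2⟩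
        · cases w with
          | nil =>
              simp only [List.nil_append, List.cons.injEq] at hw2
              exact absurd hw2.1 (Nat.ne_of_lt hsk)
          | cons c w' =>
              simp only [List.cons_append, List.cons.injEq] at hw2
              obtain ⟨rfl, _⟩ := hw2
              exact ha l₁ l₂ w' s (by rw [hv1, hw1])
        · cases w with
          | nil =>
              simp only [List.nil_append, List.cons.injEq] at hw2
              exact absurd hw2.1 (Nat.ne_of_lt hsk).symm
          | cons c w' =>
              simp only [List.cons_append, List.cons.injEq] at hw2
              obtain ⟨rfl, _⟩ := hw2
              exact ⟨k, by rw [hw1]; simp, hsk⟩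

lemma split_of_mem_max {l : List ℕ} {k : ℕ} (hadm : IsAdmissible l) (hk : k ∈ l)
    (hmax : ∀ x ∈ l, x ≤ k) :
    ∃ l₁ l₂, l = l₁ ++ k :: l₂ ∧ (∀ x ∈ l₁, x < k) ∧ (∀ x ∈ l₂, x < k) := by
  obtain ⟨l₁, l₂, rfl⟩ := List.append_of_mem hk
  refine ⟨l₁, l₂, rfl, ?_, ?_⟩
  · intro x hx
    rcases lt_or_eq_of_le (hmax x (by simp [hx])) with h | rfl
    · exact h
    · obtain ⟨a, b, rfl⟩ := List.append_of_mem hx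
      obtain ⟨t, ht, hkt⟩ := hadm a b l₂ x (by simp)
      exact absurd (hmax t (by simp [ht])) (not_le.mpr hkt)
  · intro x hx
    rcases lt_or_eq_of_le (hmax x (by simp [hx])) with h | rfl
    · exact h
    · obtain ⟨a, b, rfl⟩ := List.append_of_mem hx
      obtain ⟨t, ht, hkt⟩ := hadm l₁ a b x (by simp)
      exact absurd (hmax t (by simp [ht])) (not_le.mpr hkt)

lemma append_cons_inj {k : ℕ} : ∀ {l₁ l₁' l₂ l₂' : List ℕ},
    l₁ ++ k :: l₂ = l₁' ++ k :: l₂' → k ∉ l₁ → k ∉ l₁' → l₁ = l₁' ∧ l₂ = l₂'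
  | [], [], _, _, h, _, _ => by simpa using h
  | [], a' :: t', _, _, h, h1, h1' => by
      simp only [List.nil_append, List.cons_append, List.cons.injEq] at h
      exact absurd (h.1 ▸ (List.mem_cons_self (a := a') (l := t'))) (by rw [← h.1] at h1'; exact h1')
  | a :: t, [], _, _, h, h1, h1' => by
      simp only [List.nil_append, List.cons_append, List.cons.injEq] at h
      exact absurd (h.1.symm ▸ (List.mem_cons_self (a := a) (l := t))) (h.1 ▸ h1)
  | a :: t, a' :: t', l₂, l₂', h, h1, h1' => by
      simp only [List.cons_append, List.cons.injEq] at h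
      obtain ⟨rfl, h⟩ := h
      obtain ⟨h2, h3⟩ := append_cons_inj h (fun hm => h1 (List.mem_cons_of_mem _ hm))
        (fun hm => h1' (List.mem_cons_of_mem _ hm))
      exact ⟨by rw [h2], h3⟩

lemma pathProd_append {A : Type*} [Ring A] (B : ℕ → ℕ → A) (i j k : ℕ) :
    ∀ (l₁ l₂ : List ℕ),
      pathProd B i j (l₁ ++ k :: l₂) = pathProd B i k l₁ * pathProd B k j l₂
  | [], l₂ => by simp [pathProd]
  | a :: t, l₂ => by
      have ih := pathProd_append B a j k t l₂
      show B i a * pathProd B a j (t ++ k :: l₂) = B i a * pathProd B a k t * pathProd B k j l₂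
      rw [ih, mul_assoc]

lemma length_lt_of_admissible : ∀ (n : ℕ) (l : List ℕ), IsAdmissible l →
    (∀ x ∈ l, x < n) → l.length < 2 ^ n := by
  intro n
  induction n with
  | zero =>
      intro l _ hx
      cases l with
      | nil => simp
      | cons a t => exact absurd (hx a (by simp)) (by omega)
  | succ n ih =>
      intro l hadm hx
      by_cases hn : n ∈ l
      · obtain ⟨l₁, l₂, rfl, h₁, h₂⟩ := split_of_mem_max hadm hn
          (fun x hx' => Nat.lt_succ_iff.mp (hx x hx'))
        have b₁ := ih l₁ (hadm.infix ⟨[], n :: l₂, by simp⟩) h₁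
        have b₂ := ih l₂ (hadm.infix ⟨l₁ ++ [n], [], by simp⟩) h₂
        have h2 : 2 ^ n + 2 ^ n = 2 ^ (n + 1) := by ring
        simp only [List.length_append, List.length_cons]
        omega
      · have h1 := ih l hadm (fun x hx' => by
          have h2 := hx x hx'
          have h3 : x ≠ n := fun h => hn (h ▸ hx')
          omega)
        have h2 : (2:ℕ) ^ n < 2 ^ (n + 1) := by
          have : (2:ℕ) ^ (n+1) = 2 * 2 ^ n := by ring
          omega
        omega

lemma finite_bounded_lists (n N : ℕ) :
    {l : List ℕ | (∀ x ∈ l, x < n) ∧ l.length ≤ N}.Finite := by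
  induction N with
  | zero =>
      apply Set.Finite.subset (Set.finite_singleton ([] : List ℕ))
      rintro l ⟨-, hl⟩
      simp only [Set.mem_singleton_iff]
      exact List.length_eq_zero_iff.mp (Nat.le_zero.mp hl)
  | succ N ih =>
      apply Set.Finite.subset (Set.Finite.insert []
        (((Set.finite_Iio n).prod ih).image (fun p => p.1 :: p.2)))
      rintro l ⟨h1, h2⟩
      cases l with
      | nil => exact Set.mem_insert _ _
      | cons a t =>
          exact Set.mem_insert_iff.mpr (Or.inr ⟨(a, t),
            ⟨h1 a (by simp), fun x hx => h1 x (by simp [hx]), by simpa using h2⟩, rfl⟩)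

lemma Dset_finite (n : ℕ) : (Dset n).Finite :=
  (finite_bounded_lists n (2 ^ n)).subset (fun l hl =>
    ⟨fun x hx => (hl.2 x hx).2,
     le_of_lt (length_lt_of_admissible n l hl.1 (fun x hx => (hl.2 x hx).2))⟩)

def Sset (i j : ℕ) : Set (List ℕ) := {l : List ℕ | (i :: l) ∈ Dset j}

lemma Sset_finite (i j : ℕ) : (Sset i j).Finite := by
  have h : Sset i j ⊆ (fun l => i :: l) ⁻¹' (Dset j) := fun l h => h
  exact (Set.Finite.preimage (fun a _ b _ hab => by injection hab) (Dset_finite j)).subset h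


def maxEntry (l : List ℕ) : ℕ := l.foldr max 0

lemma le_maxEntry : ∀ {l : List ℕ} {x : ℕ}, x ∈ l → x ≤ maxEntry l := by
  intro l
  induction l with
  | nil => simp
  | cons a t ih =>
      intro x hx
      rcases List.mem_cons.mp hx with rfl | h
      · exact le_max_left _ _
      · exact le_trans (ih h) (le_max_right _ _)

lemma maxEntry_le {l : List ℕ} {k : ℕ} (h : ∀ x ∈ l, x ≤ k) : maxEntry l ≤ k := by
  induction l with
  | nil => exact Nat.zero_le k
  | cons a t ih =>
      exact max_le (h a (by simp)) (ih (fun x hx => h x (by simp [hx])))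

lemma maxEntry_mem : ∀ {l : List ℕ}, maxEntry l ≠ 0 → maxEntry l ∈ l := by
  intro l
  induction l with
  | nil => intro h; exact absurd rfl h
  | cons a t ih =>
      intro h
      rcases le_total (maxEntry t) a with hle | hle
      · have he : maxEntry (a :: t) = a := max_eq_left hle
        rw [he]; simp
      · have he : maxEntry (a :: t) = maxEntry t := max_eq_right hle
        rw [he] at h ⊢
        exact List.mem_cons_of_mem _ (ih h)

def firstGe (i : ℕ) : List ℕ → ℕ
  | [] => 0
  | a :: t => if i ≤ a then a else firstGe i t

lemma firstGe_append {i k : ℕ} (hk : i ≤ k) :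
    ∀ {l₁ : List ℕ} (l₂ : List ℕ), (∀ x ∈ l₁, x < i) → firstGe i (l₁ ++ k :: l₂) = k := by
  intro l₁
  induction l₁ with
  | nil => intro l₂ _; simp [firstGe, hk]
  | cons a t ih =>
      intro l₂ h
      have ha : ¬ i ≤ a := not_le.mpr (h a (by simp))
      simp only [List.cons_append, firstGe, if_neg ha]
      exact ih l₂ (fun x hx => h x (by simp [hx]))

lemma exists_first_ge {i : ℕ} : ∀ {l : List ℕ}, (¬ ∀ x ∈ l, x < i) →
    ∃ l₁ k l₂, l = l₁ ++ k :: l₂ ∧ (∀ x ∈ l₁, x < i) ∧ i ≤ k := by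
  intro l
  induction l with
  | nil => intro h; exact absurd (by simp) h
  | cons a t ih =>
      intro h
      by_cases ha : i ≤ a
      · exact ⟨[], a, t, by simp, by simp, ha⟩
      · have ht : ¬ ∀ x ∈ t, x < i := fun hall => h (fun x hx => by
          rcases List.mem_cons.mp hx with rfl | hx'
          · exact not_le.mp ha
          · exact hall x hx')
        obtain ⟨l₁, k, l₂, rfl, h1, h2⟩ := ih ht
        refine ⟨a :: l₁, k, l₂, by simp, ?_, h2⟩
        intro x hx
        rcases List.mem_cons.mp hx with rfl | hx'
        · exact not_le.mp ha
        · exact h1 x hx'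

open Classical in
noncomputable def kappa1 (i : ℕ) (l : List ℕ) : ℕ :=
  if ∀ x ∈ l, x < i then i else maxEntry l

open Classical in
noncomputable def kappa2 (i : ℕ) (l : List ℕ) : ℕ :=
  if ∀ x ∈ l, x < i then i else firstGe i l

lemma kappa1_pos {i : ℕ} {l : List ℕ} (h : ∀ x ∈ l, x < i) : kappa1 i l = i := by
  rw [kappa1, if_pos h]

lemma kappa1_neg {i : ℕ} {l : List ℕ} (h : ¬ ∀ x ∈ l, x < i) : kappa1 i l = maxEntry l := by
  rw [kappa1, if_neg h]

lemma kappa2_pos {i : ℕ} {l : List ℕ} (h : ∀ x ∈ l, x < i) : kappa2 i l = i := by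
  rw [kappa2, if_pos h]

lemma kappa2_neg {i : ℕ} {l : List ℕ} (h : ¬ ∀ x ∈ l, x < i) : kappa2 i l = firstGe i l := by
  rw [kappa2, if_neg h]

lemma Cpoly_eq_sum {A : Type*} [Ring A] (B : ℕ → ℕ → A) {i j : ℕ} (hij : i ≠ j) :
    Cpoly B i j = ∑ l ∈ (Sset_finite i j).toFinset, pathProd B i j l := by
  rw [Cpoly, if_neg hij]
  exact finsum_mem_eq_finite_toFinset_sum _ (Sset_finite i j)

lemma Mpoly_eq_sum_left {A : Type*} [Ring A] (B : ℕ → ℕ → A) {i j : ℕ} (hij : i ≤ j) :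
    Mpoly B i j = ∑ l ∈ (Dset_finite i).toFinset, pathProd B i j l := by
  rw [Mpoly]
  have h : min i j = i := min_eq_left hij
  rw [h]
  exact finsum_mem_eq_finite_toFinset_sum _ (Dset_finite i)

lemma mem_DsetF {n : ℕ} {l : List ℕ} :
    l ∈ (Dset_finite n).toFinset ↔ IsAdmissible l ∧ ∀ x ∈ l, 1 ≤ x ∧ x < n := by
  rw [Set.Finite.mem_toFinset]; rfl

lemma mem_SsetF {i j : ℕ} {l : List ℕ} :
    l ∈ (Sset_finite i j).toFinset ↔
      IsAdmissible (i :: l) ∧ ∀ x ∈ i :: l, 1 ≤ x ∧ x < j := by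
  rw [Set.Finite.mem_toFinset]; rfl

lemma key1 {A : Type*} [Ring A] (B : ℕ → ℕ → A) {i j : ℕ} (hi : 1 ≤ i) (hij : i < j) :
    Cpoly B i j = Mpoly B i j + ∑ k ∈ Finset.Ioo i j, Cpoly B i k * Mpoly B k j := by
  classical
  rw [Cpoly_eq_sum B (Nat.ne_of_lt hij)]
  have hmaps : ∀ l ∈ (Sset_finite i j).toFinset, kappa1 i l ∈ Finset.Ico i j := by
    intro l hl
    rw [mem_SsetF] at hl
    by_cases hall : ∀ x ∈ l, x < i
    · rw [kappa1_pos hall]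
      exact Finset.mem_Ico.mpr ⟨le_refl i, hij⟩
    · rw [kappa1_neg hall]
      push_neg at hall
      obtain ⟨x₀, hx₀, hx₀i⟩ := hall
      have h1 : i ≤ maxEntry l := le_trans hx₀i (le_maxEntry hx₀)
      have h2 : maxEntry l ∈ l := maxEntry_mem (by omega)
      have h3 : maxEntry l < j := (hl.2 _ (List.mem_cons_of_mem _ h2)).2
      exact Finset.mem_Ico.mpr ⟨h1, h3⟩
  rw [← Finset.sum_fiberwise_of_maps_to hmaps (pathProd B i j)]
  have hIco : Finset.Ico i j = insert i (Finset.Ioo i j) := by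
    ext x
    simp only [Finset.mem_Ico, Finset.mem_insert, Finset.mem_Ioo]
    omega
  rw [hIco, Finset.sum_insert (by simp)]
  congr 1
  · -- fiber at i equals Mpoly B i j
    rw [Mpoly_eq_sum_left B hij.le]
    apply Finset.sum_congr
    · ext l
      simp only [Finset.mem_filter, mem_SsetF, mem_DsetF]
      constructor
      · rintro ⟨⟨hadm, hran⟩, hκl⟩
        have hall : ∀ x ∈ l, x < i := by
          by_contra hall
          rw [kappa1_neg hall] at hκl
          push_neg at hall
          obtain ⟨x₀, hx₀, hx₀i⟩ := hall
          have h1 : i ≤ maxEntry l := le_trans hx₀i (le_maxEntry hx₀)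
          have h2 : maxEntry l ∈ l := maxEntry_mem (by omega)
          rw [hκl] at h2
          obtain ⟨l₁, l₂, hsplit⟩ := List.append_of_mem h2
          obtain ⟨t, ht, hit⟩ := hadm [] l₁ l₂ i (by rw [hsplit]; rfl)
          have htl : t ∈ l := by
            rw [hsplit]
            exact List.mem_append.mpr (Or.inl ht)
          have := le_maxEntry htl
          omega
        exact ⟨hadm.infix ⟨[i], [], by simp⟩,
          fun x hx => ⟨(hran x (List.mem_cons_of_mem _ hx)).1, hall x hx⟩⟩
      · rintro ⟨hadm, hran⟩
        have hall : ∀ x ∈ l, x < i := fun x hx => (hran x hx).2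
        refine ⟨⟨isAdmissible_cons hadm hall, ?_⟩, kappa1_pos hall⟩
        intro x hx
        rcases List.mem_cons.mp hx with rfl | hx'
        · exact ⟨hi, hij⟩
        · exact ⟨(hran x hx').1, lt_trans (hall x hx') hij⟩
    · intro l _
      rfl
  · -- fibers at k ∈ Ioo i j
    apply Finset.sum_congr rfl
    intro k hk
    rw [Finset.mem_Ioo] at hk
    have hik : 1 ≤ k := le_trans hi hk.1.le
    rw [Cpoly_eq_sum B (Nat.ne_of_lt hk.1), Mpoly_eq_sum_left B hk.2.le,
      Finset.sum_mul_sum]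
    rw [← Finset.sum_product']
    have hinj : ∀ p ∈ (Sset_finite i k).toFinset ×ˢ (Dset_finite k).toFinset,
        ∀ p' ∈ (Sset_finite i k).toFinset ×ˢ (Dset_finite k).toFinset,
        p.1 ++ k :: p.2 = p'.1 ++ k :: p'.2 → p = p' := by
      rintro ⟨a1, a2⟩ hA ⟨b1, b2⟩ hB hEq
      simp only [Finset.mem_product, mem_SsetF, mem_DsetF] at hA hB
      have hka : k ∉ a1 := fun hm =>
        absurd ((hA.1.2 k (List.mem_cons_of_mem _ hm)).2) (lt_irrefl k)
      have hkb : k ∉ b1 := fun hm =>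
        absurd ((hB.1.2 k (List.mem_cons_of_mem _ hm)).2) (lt_irrefl k)
      obtain ⟨e1, e2⟩ := append_cons_inj hEq hka hkb
      exact Prod.ext e1 e2
    have himg : (Sset_finite i j).toFinset.filter (fun l => kappa1 i l = k)
        = ((Sset_finite i k).toFinset ×ˢ (Dset_finite k).toFinset).image
            (fun p => p.1 ++ k :: p.2) := by
      ext l
      simp only [Finset.mem_filter, Finset.mem_image, Finset.mem_product, mem_SsetF, mem_DsetF]
      constructor
      · rintro ⟨⟨hadm, hran⟩, hκl⟩
        have hall : ¬ ∀ x ∈ l, x < i := by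
          intro hall
          rw [kappa1_pos hall] at hκl
          omega
        rw [kappa1_neg hall] at hκl
        have hkl : k ∈ l := by
          rw [← hκl]
          exact maxEntry_mem (by omega)
        have hladm : IsAdmissible l := hadm.infix ⟨[i], [], by simp⟩
        obtain ⟨l₁, l₂, rfl, h1, h2⟩ := split_of_mem_max hladm hkl
          (fun x hx => hκl ▸ le_maxEntry hx)
        refine ⟨(l₁, l₂), ⟨⟨?_, ?_⟩, ?_, ?_⟩, rfl⟩
        · exact hadm.infix ⟨[], k :: l₂, by simp⟩
        · intro x hx
          rcases List.mem_cons.mp hx with rfl | hx'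
          · exact ⟨hi, hk.1⟩
          · exact ⟨(hran x (by simp [hx'])).1, h1 x hx'⟩
        · exact hladm.infix ⟨l₁ ++ [k], [], by simp⟩
        · exact fun x hx => ⟨(hran x (by simp [hx])).1, h2 x hx⟩
      · rintro ⟨⟨l₁, l₂⟩, ⟨⟨hadm1, hran1⟩, hadm2, hran2⟩, rfl⟩
        have h1 : ∀ x ∈ l₁, x < k := fun x hx => (hran1 x (List.mem_cons_of_mem _ hx)).2
        have h2 : ∀ x ∈ l₂, x < k := fun x hx => (hran2 x hx).2
        have hk2 : IsAdmissible (k :: l₂) := isAdmissible_cons hadm2 h2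
        have hglue : IsAdmissible ((i :: l₁) ++ k :: l₂) := by
          apply isAdmissible_append hadm1 hk2
          intro x hx
          rcases List.mem_cons.mp hx with rfl | hx'
          · exact hk.1
          · exact h1 x hx'
        refine ⟨⟨hglue, ?_⟩, ?_⟩
        · intro x hx
          simp only [List.mem_cons, List.mem_append] at hx
          rcases hx with rfl | hx | rfl | hx
          · exact ⟨hi, hij⟩
          · exact ⟨(hran1 x (List.mem_cons_of_mem _ hx)).1, lt_trans (h1 x hx) hk.2⟩
          · exact ⟨hik, hk.2⟩
          · exact ⟨(hran2 x hx).1, lt_trans (h2 x hx) hk.2⟩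
        · have hkl : k ∈ l₁ ++ k :: l₂ := by simp
          have hnall : ¬ ∀ x ∈ l₁ ++ k :: l₂, x < i := fun hall =>
            absurd (hall k hkl) (by omega)
          rw [kappa1_neg hnall]
          refine le_antisymm (maxEntry_le ?_) (le_maxEntry hkl)
          intro x hx
          simp only [List.mem_append, List.mem_cons] at hx
          rcases hx with hx | rfl | hx
          · exact (h1 x hx).le
          · exact le_refl x
          · exact (h2 x hx).le
    rw [himg, Finset.sum_image hinj]
    apply Finset.sum_congr rfl
    intro p _
    exact pathProd_append B i j k p.1 p.2

lemma key2 {A : Type*} [Ring A] (B : ℕ → ℕ → A) {i j : ℕ} (hi : 1 ≤ i) (hij : i < j) :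
    Cpoly B i j = Mpoly B i j + ∑ k ∈ Finset.Ioo i j, Mpoly B i k * Cpoly B k j := by
  classical
  rw [Cpoly_eq_sum B (Nat.ne_of_lt hij)]
  have hmaps : ∀ l ∈ (Sset_finite i j).toFinset, kappa2 i l ∈ Finset.Ico i j := by
    intro l hl
    rw [mem_SsetF] at hl
    by_cases hall : ∀ x ∈ l, x < i
    · rw [kappa2_pos hall]
      exact Finset.mem_Ico.mpr ⟨le_refl i, hij⟩
    · rw [kappa2_neg hall]
      obtain ⟨l₁, k, l₂, rfl, h1, h2⟩ := exists_first_ge hall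
      rw [firstGe_append h2 l₂ h1]
      exact Finset.mem_Ico.mpr ⟨h2, (hl.2 k (by simp)).2⟩
  rw [← Finset.sum_fiberwise_of_maps_to hmaps (pathProd B i j)]
  have hIco : Finset.Ico i j = insert i (Finset.Ioo i j) := by
    ext x
    simp only [Finset.mem_Ico, Finset.mem_insert, Finset.mem_Ioo]
    omega
  rw [hIco, Finset.sum_insert (by simp)]
  congr 1
  · rw [Mpoly_eq_sum_left B hij.le]
    apply Finset.sum_congr
    · ext l
      simp only [Finset.mem_filter, mem_SsetF, mem_DsetF]
      constructor
      · rintro ⟨⟨hadm, hran⟩, hκl⟩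
        have hall : ∀ x ∈ l, x < i := by
          by_contra hall
          rw [kappa2_neg hall] at hκl
          obtain ⟨l₁, k, l₂, rfl, h1, h2⟩ := exists_first_ge hall
          rw [firstGe_append h2 l₂ h1] at hκl
          subst hκl
          obtain ⟨t, ht, hit⟩ := hadm [] l₁ l₂ k rfl
          exact absurd (h1 t ht) (by omega)
        exact ⟨hadm.infix ⟨[i], [], by simp⟩,
          fun x hx => ⟨(hran x (List.mem_cons_of_mem _ hx)).1, hall x hx⟩⟩
      · rintro ⟨hadm, hran⟩
        have hall : ∀ x ∈ l, x < i := fun x hx => (hran x hx).2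
        refine ⟨⟨isAdmissible_cons hadm hall, ?_⟩, kappa2_pos hall⟩
        intro x hx
        rcases List.mem_cons.mp hx with rfl | hx'
        · exact ⟨hi, hij⟩
        · exact ⟨(hran x hx').1, lt_trans (hall x hx') hij⟩
    · intro l _
      rfl
  · apply Finset.sum_congr rfl
    intro k hk
    rw [Finset.mem_Ioo] at hk
    have hik : 1 ≤ k := le_trans hi hk.1.le
    rw [Cpoly_eq_sum B (Nat.ne_of_lt hk.2), Mpoly_eq_sum_left B hk.1.le,
      Finset.sum_mul_sum]
    rw [← Finset.sum_product']
    have hinj : ∀ p ∈ (Dset_finite i).toFinset ×ˢ (Sset_finite k j).toFinset,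
        ∀ p' ∈ (Dset_finite i).toFinset ×ˢ (Sset_finite k j).toFinset,
        p.1 ++ k :: p.2 = p'.1 ++ k :: p'.2 → p = p' := by
      rintro ⟨a1, a2⟩ hA ⟨b1, b2⟩ hB hEq
      simp only [Finset.mem_product, mem_SsetF, mem_DsetF] at hA hB
      have hka : k ∉ a1 := fun hm => absurd ((hA.1.2 k hm).2) (by omega)
      have hkb : k ∉ b1 := fun hm => absurd ((hB.1.2 k hm).2) (by omega)
      obtain ⟨e1, e2⟩ := append_cons_inj hEq hka hkb
      exact Prod.ext e1 e2
    have himg : (Sset_finite i j).toFinset.filter (fun l => kappa2 i l = k)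
        = ((Dset_finite i).toFinset ×ˢ (Sset_finite k j).toFinset).image
            (fun p => p.1 ++ k :: p.2) := by
      ext l
      simp only [Finset.mem_filter, Finset.mem_image, Finset.mem_product, mem_SsetF, mem_DsetF]
      constructor
      · rintro ⟨⟨hadm, hran⟩, hκl⟩
        have hall : ¬ ∀ x ∈ l, x < i := by
          intro hall
          rw [kappa2_pos hall] at hκl
          omega
        rw [kappa2_neg hall] at hκl
        obtain ⟨l₁, k₀, l₂, rfl, h1, h2⟩ := exists_first_ge hall
        rw [firstGe_append h2 l₂ h1] at hκl
        obtain rfl : k = k₀ := hκl.symm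
        have hladm : IsAdmissible (l₁ ++ k :: l₂) := hadm.infix ⟨[i], [], by simp⟩
        refine ⟨(l₁, l₂), ⟨⟨?_, ?_⟩, ?_, ?_⟩, rfl⟩
        · exact hladm.infix ⟨[], k :: l₂, by simp⟩
        · exact fun x hx => ⟨(hran x (by simp [hx])).1, h1 x hx⟩
        · exact hladm.infix ⟨l₁, [], by simp⟩
        · intro x hx
          rcases List.mem_cons.mp hx with rfl | hx'
          · exact ⟨hik, (hran x (by simp)).2⟩
          · exact (hran x (by simp [hx']))
      · rintro ⟨⟨l₁, l₂⟩, ⟨⟨hadm1, hran1⟩, hadm2, hran2⟩, rfl⟩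
        have h1 : ∀ x ∈ l₁, x < i := fun x hx => (hran1 x hx).2
        have hglue : IsAdmissible ((i :: l₁) ++ k :: l₂) := by
          apply isAdmissible_append (isAdmissible_cons hadm1 h1) hadm2
          intro x hx
          rcases List.mem_cons.mp hx with rfl | hx'
          · exact hk.1
          · exact lt_trans (h1 x hx') hk.1
        refine ⟨⟨hglue, ?_⟩, ?_⟩
        · intro x hx
          simp only [List.mem_cons, List.mem_append] at hx
          rcases hx with rfl | hx | rfl | hx
          · exact ⟨hi, hij⟩
          · exact ⟨(hran1 x hx).1, lt_trans (lt_trans (h1 x hx) hk.1) hk.2⟩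
          · exact ⟨hik, (hran2 x (by simp)).2⟩
          · exact (hran2 x (by simp [hx]))
        · have hkl : k ∈ l₁ ++ k :: l₂ := by simp
          have hnall : ¬ ∀ x ∈ l₁ ++ k :: l₂, x < i := fun hall =>
            absurd (hall k hkl) (by omega)
          rw [kappa2_neg hnall]
          exact firstGe_append hk.1.le l₂ h1
    rw [himg, Finset.sum_image hinj]
    apply Finset.sum_congr rfl
    intro p _
    exact pathProd_append B i j k p.1 p.2

lemma sum_aux {R : Type*} [AddCommMonoid R] {q : ℕ} (i j : Fin q) (hij : i < j)
    (f : Fin q → R)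
    (h0 : ∀ k : Fin q, ((k:ℕ) < (i:ℕ) ∨ (j:ℕ) < (k:ℕ)) → f k = 0) :
    ∑ k, f k = f i + (f j + ∑ k ∈ Finset.Ioo i j, f k) := by
  rw [← Finset.sum_subset (Finset.subset_univ (Finset.Icc i j)) (by
    intro k _ hk
    rw [Finset.mem_Icc] at hk
    push_neg at hk
    apply h0
    by_cases h : i ≤ k
    · exact Or.inr (hk h)
    · exact Or.inl (not_le.mp h))]
  rw [← Finset.Ioc_insert_left hij.le, Finset.sum_insert (by simp),
    ← Finset.Ioo_insert_right hij, Finset.sum_insert (by simp)]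

lemma sum_Ioo_fin {R : Type*} [AddCommMonoid R] {q : ℕ} (i j : Fin q) (g : ℕ → R) :
    ∑ k ∈ Finset.Ioo i j, g (k:ℕ) = ∑ m ∈ Finset.Ioo (i:ℕ) (j:ℕ), g m := by
  rw [← Fin.map_valEmbedding_Ioo, Finset.sum_map]
  rfl

lemma sum_Ioo_shift {R : Type*} [AddCommMonoid R] (i j : ℕ) (g : ℕ → R) :
    ∑ m ∈ Finset.Ioo i j, g (m + 1) = ∑ m ∈ Finset.Ioo (i+1) (j+1), g m := by
  rw [← Finset.map_add_right_Ioo, Finset.sum_map]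
  rfl


/-- the unit upper triangular matrices with strictly-upper entries
`C_{i,j}` resp. `−M_{i,j}` are two-sided inverses of each other. -/
theorem UC_UM_inverse (q : ℕ) (hq : 1 ≤ q)
    (UC UM : Matrix (Fin q) (Fin q) (FreeAlgebra ℤ (ℕ × ℕ)))
    (hUC : ∀ i j : Fin q, UC i j =
      if (i : ℕ) = (j : ℕ) then 1
      else if (i : ℕ) < (j : ℕ) then Cpoly Bgen ((i : ℕ) + 1) ((j : ℕ) + 1) else 0)
    (hUM : ∀ i j : Fin q, UM i j =
      if (i : ℕ) = (j : ℕ) then 1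
      else if (i : ℕ) < (j : ℕ) then - Mpoly Bgen ((i : ℕ) + 1) ((j : ℕ) + 1) else 0) :
    UC * UM = 1 ∧ UM * UC = 1 := by

  have key1' : ∀ i j : Fin q, (i:ℕ) < (j:ℕ) →
      Cpoly Bgen ((i:ℕ)+1) ((j:ℕ)+1) = Mpoly Bgen ((i:ℕ)+1) ((j:ℕ)+1) +
        ∑ k ∈ Finset.Ioo ((i:ℕ)+1) ((j:ℕ)+1),
          Cpoly Bgen ((i:ℕ)+1) k * Mpoly Bgen k ((j:ℕ)+1) :=
    fun i j h => key1 Bgen (by omega) (by omega)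
  have key2' : ∀ i j : Fin q, (i:ℕ) < (j:ℕ) →
      Cpoly Bgen ((i:ℕ)+1) ((j:ℕ)+1) = Mpoly Bgen ((i:ℕ)+1) ((j:ℕ)+1) +
        ∑ k ∈ Finset.Ioo ((i:ℕ)+1) ((j:ℕ)+1),
          Mpoly Bgen ((i:ℕ)+1) k * Cpoly Bgen k ((j:ℕ)+1) :=
    fun i j h => key2 Bgen (by omega) (by omega)
  constructor
  · ext i j
    rw [Matrix.mul_apply]
    rcases Nat.lt_trichotomy (i:ℕ) (j:ℕ) with hij | hij | hij
    · have hne : i ≠ j := fun h => by rw [h] at hij; exact lt_irrefl _ hij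
      rw [Matrix.one_apply_ne hne]
      have hlt : i < j := hij
      have h0 : ∀ k : Fin q, ((k:ℕ) < (i:ℕ) ∨ (j:ℕ) < (k:ℕ)) → UC i k * UM k j = 0 := by
        intro k hk
        rcases hk with hk | hk
        · rw [hUC i k, if_neg (by omega), if_neg (by omega), zero_mul]
        · rw [hUM k j, if_neg (by omega), if_neg (by omega), mul_zero]
      rw [sum_aux i j hlt _ h0]
      have hIoo : ∑ k ∈ Finset.Ioo i j, UC i k * UM k j
          = ∑ m ∈ Finset.Ioo ((i:ℕ)+1) ((j:ℕ)+1),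
              -(Cpoly Bgen ((i:ℕ)+1) m * Mpoly Bgen m ((j:ℕ)+1)) := by
        have hstep : ∀ k ∈ Finset.Ioo i j, UC i k * UM k j
            = -(Cpoly Bgen ((i:ℕ)+1) ((k:ℕ)+1) * Mpoly Bgen ((k:ℕ)+1) ((j:ℕ)+1)) := by
          intro k hk
          rw [Finset.mem_Ioo] at hk
          have h2 : (i:ℕ) < (k:ℕ) := hk.1
          have h3 : (k:ℕ) < (j:ℕ) := hk.2
          rw [hUC i k, hUM k j, if_neg (by omega), if_pos h2, if_neg (by omega), if_pos h3,
            mul_neg]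
        rw [Finset.sum_congr rfl hstep]
        rw [sum_Ioo_fin i j
          (fun m => -(Cpoly Bgen ((i:ℕ)+1) (m+1) * Mpoly Bgen (m+1) ((j:ℕ)+1)))]
        exact sum_Ioo_shift (i:ℕ) (j:ℕ)
          (fun m => -(Cpoly Bgen ((i:ℕ)+1) m * Mpoly Bgen m ((j:ℕ)+1)))
      rw [hIoo, hUC i i, hUM i j, hUC i j, hUM j j, if_pos rfl, if_pos rfl,
        if_neg (by omega), if_pos hij, if_neg (by omega), if_pos hij]
      rw [key1' i j hij]
      simp only [one_mul, mul_one, Finset.sum_neg_distrib]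
      abel
    · have heq : i = j := Fin.ext hij
      subst heq
      rw [Matrix.one_apply_eq]
      rw [Finset.sum_eq_single i (fun k _ hk => by
        have hv : (k:ℕ) ≠ (i:ℕ) := fun hv => hk (Fin.ext hv)
        rcases Nat.lt_trichotomy (k:ℕ) (i:ℕ) with h | h | h
        · rw [hUC i k, if_neg (by omega), if_neg (by omega), zero_mul]
        · exact absurd h hv
        · rw [hUM k i, if_neg (by omega), if_neg (by omega), mul_zero])
        (fun h => absurd (Finset.mem_univ i) h)]
      rw [hUC i i, hUM i i, if_pos rfl, if_pos rfl, one_mul]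
    · have hne : i ≠ j := fun h => by rw [h] at hij; exact lt_irrefl _ hij
      rw [Matrix.one_apply_ne hne]
      apply Finset.sum_eq_zero
      intro k _
      rcases Nat.lt_trichotomy (k:ℕ) (i:ℕ) with h | h | h
      · rw [hUC i k, if_neg (by omega), if_neg (by omega), zero_mul]
      · rw [hUM k j, if_neg (by omega), if_neg (by omega), mul_zero]
      · rw [hUM k j, if_neg (by omega), if_neg (by omega), mul_zero]
  · ext i j
    rw [Matrix.mul_apply]
    rcases Nat.lt_trichotomy (i:ℕ) (j:ℕ) with hij | hij | hij
    · have hne : i ≠ j := fun h => by rw [h] at hij; exact lt_irrefl _ hij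
      rw [Matrix.one_apply_ne hne]
      have hlt : i < j := hij
      have h0 : ∀ k : Fin q, ((k:ℕ) < (i:ℕ) ∨ (j:ℕ) < (k:ℕ)) → UM i k * UC k j = 0 := by
        intro k hk
        rcases hk with hk | hk
        · rw [hUM i k, if_neg (by omega), if_neg (by omega), zero_mul]
        · rw [hUC k j, if_neg (by omega), if_neg (by omega), mul_zero]
      rw [sum_aux i j hlt _ h0]
      have hIoo : ∑ k ∈ Finset.Ioo i j, UM i k * UC k j
          = ∑ m ∈ Finset.Ioo ((i:ℕ)+1) ((j:ℕ)+1),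
              -(Mpoly Bgen ((i:ℕ)+1) m * Cpoly Bgen m ((j:ℕ)+1)) := by
        have hstep : ∀ k ∈ Finset.Ioo i j, UM i k * UC k j
            = -(Mpoly Bgen ((i:ℕ)+1) ((k:ℕ)+1) * Cpoly Bgen ((k:ℕ)+1) ((j:ℕ)+1)) := by
          intro k hk
          rw [Finset.mem_Ioo] at hk
          have h2 : (i:ℕ) < (k:ℕ) := hk.1
          have h3 : (k:ℕ) < (j:ℕ) := hk.2
          rw [hUM i k, hUC k j, if_neg (by omega), if_pos h2, if_neg (by omega), if_pos h3,
            neg_mul]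
        rw [Finset.sum_congr rfl hstep]
        rw [sum_Ioo_fin i j
          (fun m => -(Mpoly Bgen ((i:ℕ)+1) (m+1) * Cpoly Bgen (m+1) ((j:ℕ)+1)))]
        exact sum_Ioo_shift (i:ℕ) (j:ℕ)
          (fun m => -(Mpoly Bgen ((i:ℕ)+1) m * Cpoly Bgen m ((j:ℕ)+1)))
      rw [hIoo, hUM i i, hUC i j, hUM i j, hUC j j, if_pos rfl, if_pos rfl,
        if_neg (by omega), if_pos hij, if_neg (by omega), if_pos hij]
      rw [key2' i j hij]
      simp only [one_mul, mul_one, Finset.sum_neg_distrib]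
      abel
    · have heq : i = j := Fin.ext hij
      subst heq
      rw [Matrix.one_apply_eq]
      rw [Finset.sum_eq_single i (fun k _ hk => by
        have hv : (k:ℕ) ≠ (i:ℕ) := fun hv => hk (Fin.ext hv)
        rcases Nat.lt_trichotomy (k:ℕ) (i:ℕ) with h | h | h
        · rw [hUM i k, if_neg (by omega), if_neg (by omega), zero_mul]
        · exact absurd h hv
        · rw [hUC k i, if_neg (by omega), if_neg (by omega), mul_zero])
        (fun h => absurd (Finset.mem_univ i) h)]
      rw [hUM i i, hUC i i, if_pos rfl, if_pos rfl, one_mul]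
    · have hne : i ≠ j := fun h => by rw [h] at hij; exact lt_irrefl _ hij
      rw [Matrix.one_apply_ne hne]
      apply Finset.sum_eq_zero
      intro k _
      rcases Nat.lt_trichotomy (k:ℕ) (i:ℕ) with h | h | h
      · rw [hUM i k, if_neg (by omega), if_neg (by omega), zero_mul]
      · rw [hUC k j, if_neg (by omega), if_neg (by omega), mul_zero]
      · rw [hUC k j, if_neg (by omega), if_neg (by omega), mul_zero]
end

section
/- Let R be a commutative ring, let λ be a permutation of {1, …, q}, let 1 ≤ i ≤ q−1 and b ∈ R. Then P_λ · E_i(b) = (I_q + b·e_{λ^{-1}(i), λ^{-1}(i+1)}) · P_{τ_i ∘ λ}, where e_{r,s} denotes the q×q matrix whose only nonzero entry is a 1 in position (r,s), and τ_i ∘ λ is the composition applying λ first and then the transposition τ_i. -/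
/-- `Ematrix q R i b` is the `q×q` matrix over `R` agreeing with the identity except
that its `2×2` submatrix in (1-based) rows and columns `i, i+1` is `[[b, 1], [1, 0]]`. -/
def Ematrix (q : ℕ) (R : Type*) [CommRing R] (i : ℕ) (b : R) :
    Matrix (Fin q) (Fin q) R :=
  Matrix.of fun r s =>
    if (r : ℕ) + 1 = i ∧ (s : ℕ) + 1 = i then b
    else if (r : ℕ) + 1 = i ∧ (s : ℕ) + 1 = i + 1 then 1
    else if (r : ℕ) + 1 = i + 1 ∧ (s : ℕ) + 1 = i then 1
    else if (r : ℕ) + 1 = i + 1 ∧ (s : ℕ) + 1 = i + 1 then 0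
    else if r = s then 1 else 0

/-- A positive braid word on `q` strands: a sequence of generator indices `i_k`
with `1 ≤ i_k ≤ q - 1`. -/
def IsBraidWord (q : ℕ) {w : ℕ} (β : Fin w → ℕ) : Prop :=
  ∀ k, 1 ≤ β k ∧ β k + 1 ≤ q

/-- The path matrix `B_β(b₁, …, b_w) = E_{i₁}(b₁) ⋯ E_{i_w}(b_w)`. -/
def pathMatrix (q : ℕ) (R : Type*) [CommRing R] {w : ℕ}
    (β : Fin w → ℕ) (b : Fin w → R) : Matrix (Fin q) (Fin q) R :=
  (List.ofFn fun k : Fin w => Ematrix q R (β k) (b k)).prod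

/-- The underlying permutation `π = τ_{i_w} ∘ ⋯ ∘ τ_{i_1}` of a braid word. -/
def braidPerm {w : ℕ} (β : Fin w → ℕ) : Equiv.Perm ℕ :=
  ((List.ofFn fun k : Fin w => Equiv.swap (β k) (β k + 1)).reverse).prod

/-- The permutation matrix `P_σ = [δ_{σ(i),j}]` (1-based indices). -/
def permMatrix (q : ℕ) (R : Type*) [CommRing R] (σ : Equiv.Perm ℕ) :
    Matrix (Fin q) (Fin q) R :=
  Matrix.of fun r s => if σ ((r : ℕ) + 1) = (s : ℕ) + 1 then 1 else 0

/-- The `(i,j)` entry of a `q×q` matrix, with 1-based indices `1 ≤ i, j ≤ q`. -/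
def entry1 {q : ℕ} {R : Type*} [Zero R] (M : Matrix (Fin q) (Fin q) R) (i j : ℕ) : R :=
  if h : i - 1 < q ∧ j - 1 < q then M ⟨i - 1, h.1⟩ ⟨j - 1, h.2⟩ else 0

/-- The upper-left `n×n` submatrix of a `q×q` matrix. -/
def principalMinor {q : ℕ} {R : Type*} [Zero R]
    (M : Matrix (Fin q) (Fin q) R) (n : ℕ) : Matrix (Fin n) (Fin n) R :=
  Matrix.of fun i j => entry1 M ((i : ℕ) + 1) ((j : ℕ) + 1)

/-- `e_{r,s}` scaled by `b`: the `q×q` matrix whose only possibly nonzero entry is `b`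
in (1-based) position `(r, s)`. -/
def stdE (q : ℕ) (R : Type*) [CommRing R] (r s : ℕ) (b : R) :
    Matrix (Fin q) (Fin q) R :=
  Matrix.of fun x y => if (x : ℕ) + 1 = r ∧ (y : ℕ) + 1 = s then b else 0

/-- `P_λ · E_i(b) = (I_q + b·e_{λ⁻¹(i), λ⁻¹(i+1)}) · P_{τ_i ∘ λ}`. -/
theorem permMatrix_mul_Ematrix (q : ℕ) (R : Type*) [CommRing R]
    (lam : Equiv.Perm ℕ) (hlam : ∀ x : ℕ, ¬(1 ≤ x ∧ x ≤ q) → lam x = x)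
    (i : ℕ) (hi : 1 ≤ i) (hi' : i + 1 ≤ q) (b : R) :
    permMatrix q R lam * Ematrix q R i b =
      (1 + stdE q R (lam⁻¹ i) (lam⁻¹ (i + 1)) b) *
        permMatrix q R (Equiv.swap i (i + 1) * lam) := by
  have hrange : ∀ x : ℕ, 1 ≤ x → x ≤ q → 1 ≤ lam x ∧ lam x ≤ q := by
    intro x h1 h2
    by_contra h
    have h3 := hlam _ h
    have h4 : lam x = x := lam.injective h3
    rw [h4] at h; exact h ⟨h1, h2⟩
  have hinv : ∀ x : ℕ, 1 ≤ x → x ≤ q → 1 ≤ lam⁻¹ x ∧ lam⁻¹ x ≤ q := by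
    intro x h1 h2
    by_contra h
    have h3 := hlam _ h
    have h4 : lam (lam⁻¹ x) = x := lam.apply_symm_apply x
    rw [h3] at h4
    rw [h4] at h; exact h ⟨h1, h2⟩
  ext r s
  have hr : (r : ℕ) + 1 ≤ q := r.isLt
  obtain ⟨hu1, hu2⟩ := hrange ((r : ℕ) + 1) (by omega) hr
  obtain ⟨hv1, hv2⟩ := hinv (i + 1) (by omega) hi'
  set u := lam ((r : ℕ) + 1) with hu
  set v := lam⁻¹ (i + 1) with hv
  have t0lt : u - 1 < q := by omega
  have v0lt : v - 1 < q := by omega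
  have hLHS : (permMatrix q R lam * Ematrix q R i b) r s
      = Ematrix q R i b ⟨u - 1, t0lt⟩ s := by
    rw [Matrix.mul_apply, Finset.sum_eq_single (⟨u - 1, t0lt⟩ : Fin q)]
    · have : lam ((r : ℕ) + 1) = (u - 1) + 1 := by omega
      simp [permMatrix, this]
    · intro t _ ht
      have : ¬ lam ((r : ℕ) + 1) = (t : ℕ) + 1 := by
        intro hh
        exact ht (Fin.ext (by simp; omega))
      simp [permMatrix, this]
    · intro h; exact absurd (Finset.mem_univ _) h
  have hP : permMatrix q R (Equiv.swap i (i + 1) * lam) ⟨v - 1, v0lt⟩ s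
      = if i = (s : ℕ) + 1 then 1 else 0 := by
    have h1 : (v - 1) + 1 = v := by omega
    have h2 : lam v = i + 1 := lam.apply_symm_apply (i + 1)
    simp [permMatrix, h1, h2, Equiv.swap_apply_right]
  have hRHS : ((1 + stdE q R (lam⁻¹ i) (lam⁻¹ (i + 1)) b) *
        permMatrix q R (Equiv.swap i (i + 1) * lam)) r s
      = (if Equiv.swap i (i + 1) u = (s : ℕ) + 1 then 1 else 0)
        + (if u = i then b else 0) * (if i = (s : ℕ) + 1 then 1 else 0) := by
    rw [Matrix.add_mul, Matrix.one_mul, Matrix.add_apply]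
    have h2 : (stdE q R (lam⁻¹ i) (lam⁻¹ (i + 1)) b *
          permMatrix q R (Equiv.swap i (i + 1) * lam)) r s
        = (if u = i then b else 0) * (if i = (s : ℕ) + 1 then 1 else 0) := by
      rw [Matrix.mul_apply, Finset.sum_eq_single (⟨v - 1, v0lt⟩ : Fin q)]
      · rw [hP]
        have hiff : ((r : ℕ) + 1 = lam⁻¹ i) ↔ u = i := by
          constructor
          · intro h; rw [hu, h]; exact lam.apply_symm_apply i
          · intro h
            have := congrArg (⇑lam⁻¹) h
            simpa [hu] using this
        have hvv : (v - 1 : ℕ) + 1 = v := by omega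
        by_cases hui : u = i <;> simp [stdE, hvv, ← (show v = lam.symm (i + 1) from hv), (show ((r : ℕ) + 1 = lam.symm i) ↔ u = i from hiff), hui]
      · intro t _ ht
        have : ¬ ((t : ℕ) + 1 = v) := by
          intro hh
          exact ht (Fin.ext (by simp; omega))
        simp [stdE, this, ← (show v = lam.symm (i + 1) from hv)]
      · intro h; exact absurd (Finset.mem_univ _) h
    rw [h2]
    congr 1
  rw [hLHS, hRHS]
  simp only [Ematrix, Matrix.of_apply, Fin.ext_iff, Equiv.swap_apply_def]
  split_ifs <;> first | (exfalso; omega) | ring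
end
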